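/- Let X and Y be complex Banach spaces, B ∈ B(Y), C ∈ B(Y, X), and let M_C ∈ B(X ⊕ Y) be the upper-triangular operator matrix with A = 0, i.e. M_C(x, y) = (Cy, By). Then M_C has finite ascent if and only if B has finite ascent. -/

import Mathlib

noncomputable section

open ContinuousLinearMap Metric Set

variable {E : Type*} [NormedAddCommGroup E] [NormedSpace ℂ E]
variable {X Y : Type*} [NormedAddCommGroup X] [NormedSpace ℂ X] [CompleteSpace X]
  [NormedAddCommGroup Y] [NormedSpace ℂ Y] [CompleteSpace Y]

/-- `T` has finite ascent: some power has the same kernel as the next one. -/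
def HasFiniteAscent (T : E →L[ℂ] E) : Prop :=
  ∃ k : ℕ, LinearMap.ker ((T ^ k : E →L[ℂ] E) : E →ₗ[ℂ] E) = LinearMap.ker ((T ^ (k + 1) : E →L[ℂ] E) : E →ₗ[ℂ] E)

/-- The upper-triangular operator matrix `M_C (x, y) = (A x + C y, B y)` on `X ⊕ Y`. -/
def ucMat (A : X →L[ℂ] X) (B : Y →L[ℂ] Y) (C : Y →L[ℂ] X) :
    (X × Y) →L[ℂ] (X × Y) :=
  (A.comp (ContinuousLinearMap.fst ℂ X Y) + C.comp (ContinuousLinearMap.snd ℂ X Y)).prod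
    (B.comp (ContinuousLinearMap.snd ℂ X Y))

lemma ker_pow_step {F : Type*} [NormedAddCommGroup F] [NormedSpace ℂ F]
    {T : F →L[ℂ] F} {k : ℕ}
    (h : LinearMap.ker ((T ^ k : F →L[ℂ] F) : F →ₗ[ℂ] F) = LinearMap.ker ((T ^ (k + 1) : F →L[ℂ] F) : F →ₗ[ℂ] F)) :
    LinearMap.ker ((T ^ (k + 1) : F →L[ℂ] F) : F →ₗ[ℂ] F) = LinearMap.ker ((T ^ (k + 2) : F →L[ℂ] F) : F →ₗ[ℂ] F) := by
  apply le_antisymm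
  · intro v hv
    simp only [LinearMap.mem_ker, ContinuousLinearMap.coe_coe] at *
    have h1 : (T ^ (k + 2)) v = T ((T ^ (k + 1)) v) := by
      rw [show k + 2 = (k + 1) + 1 from rfl, pow_succ' T (k + 1)]; rfl
    rw [h1, hv, map_zero]
  · intro v hv
    simp only [LinearMap.mem_ker, ContinuousLinearMap.coe_coe] at *
    have h1 : (T ^ (k + 1)) (T v) = 0 := by
      have : (T ^ (k + 2)) v = (T ^ (k + 1)) (T v) := by
        rw [show k + 2 = (k + 1) + 1 from rfl, pow_succ T (k + 1)]; rfl
      rw [← this, hv]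
    have h2 : T v ∈ LinearMap.ker ((T ^ k : F →L[ℂ] F) : F →ₗ[ℂ] F) := h ▸ LinearMap.mem_ker.mpr h1
    have h3 : (T ^ k) (T v) = 0 := h2
    calc (T ^ (k + 1)) v = (T ^ k) (T v) := by rw [pow_succ]; rfl
    _ = 0 := h3

lemma ucMat_apply (B : Y →L[ℂ] Y) (C : Y →L[ℂ] X) (x : X) (y : Y) :
    (ucMat (0 : X →L[ℂ] X) B C) (x, y) = (C y, B y) := by
  simp [ucMat]

lemma ucMat_pow_apply (B : Y →L[ℂ] Y) (C : Y →L[ℂ] X) (n : ℕ) (x : X) (y : Y) :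
    ((ucMat (0 : X →L[ℂ] X) B C) ^ (n + 1)) (x, y) = (C ((B ^ n) y), (B ^ (n + 1)) y) := by
  induction n generalizing x y with
  | zero => simp [pow_one, ucMat_apply]
  | succ n ih =>
    have h1 : ((ucMat (0 : X →L[ℂ] X) B C) ^ (n + 2)) (x, y)
        = ((ucMat (0 : X →L[ℂ] X) B C) ^ (n + 1)) ((ucMat (0 : X →L[ℂ] X) B C) (x, y)) := by
      rw [show n + 2 = (n + 1) + 1 from rfl, pow_succ]; rfl
    rw [h1, ucMat_apply, ih]
    have h2 : (B ^ n) (B y) = (B ^ (n + 1)) y := by rw [pow_succ]; rfl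
    have h3 : (B ^ (n + 1)) (B y) = (B ^ (n + 2)) y := by
      rw [show n + 2 = (n + 1) + 1 from rfl, pow_succ]; rfl
    rw [h2, h3]

lemma ucMat_pow_snd (B : Y →L[ℂ] Y) (C : Y →L[ℂ] X) (n : ℕ) (x : X) (y : Y) :
    (((ucMat (0 : X →L[ℂ] X) B C) ^ n) (x, y)).2 = (B ^ n) y := by
  cases n with
  | zero => simp
  | succ n => rw [ucMat_pow_apply]

theorem stmt3 (B : Y →L[ℂ] Y) (C : Y →L[ℂ] X) :
    HasFiniteAscent (ucMat (0 : X →L[ℂ] X) B C) ↔ HasFiniteAscent B := by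
  set M := ucMat (0 : X →L[ℂ] X) B C with hM
  constructor
  · rintro ⟨k, hk⟩
    have hk2 : LinearMap.ker ((M ^ (k + 1) : (X × Y) →L[ℂ] (X × Y)) : (X × Y) →ₗ[ℂ] (X × Y)) = LinearMap.ker ((M ^ (k + 2) : (X × Y) →L[ℂ] (X × Y)) : (X × Y) →ₗ[ℂ] (X × Y)) := ker_pow_step hk
    refine ⟨k, le_antisymm ?_ ?_⟩
    · intro y hy
      simp only [LinearMap.mem_ker, ContinuousLinearMap.coe_coe] at hy ⊢
      calc (B ^ (k + 1)) y = B ((B ^ k) y) := by rw [pow_succ' B k]; rfl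
      _ = 0 := by rw [hy, map_zero]
    · intro y hy
      simp only [LinearMap.mem_ker, ContinuousLinearMap.coe_coe] at hy ⊢
      have hmem : ((0 : X), y) ∈ LinearMap.ker ((M ^ (k + 2) : (X × Y) →L[ℂ] (X × Y)) : (X × Y) →ₗ[ℂ] (X × Y)) := by
        rw [LinearMap.mem_ker, ContinuousLinearMap.coe_coe, hM, ucMat_pow_apply]
        have hb2 : (B ^ (k + 2)) y = 0 := by
          calc (B ^ (k + 2)) y = B ((B ^ (k + 1)) y) := by
                rw [show k + 2 = (k + 1) + 1 from rfl, pow_succ' B (k + 1)]; rfl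
          _ = 0 := by rw [hy, map_zero]
        have hc : (B ^ (k + 1)) y = 0 := hy
        rw [hb2, hc, map_zero]
        rfl
      have hmem2 : ((0 : X), y) ∈ LinearMap.ker ((M ^ k : (X × Y) →L[ℂ] (X × Y)) : (X × Y) →ₗ[ℂ] (X × Y)) := by
        rw [hk, hk2]; exact hmem
      have : (M ^ k) ((0 : X), y) = 0 := LinearMap.mem_ker.mp hmem2
      have hsnd : (B ^ k) y = ((M ^ k) ((0 : X), y)).2 := (ucMat_pow_snd B C k 0 y).symm
      rw [hsnd, this]; rfl
  · rintro ⟨k, hk⟩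
    have hk2 : LinearMap.ker ((B ^ (k + 1) : Y →L[ℂ] Y) : Y →ₗ[ℂ] Y) = LinearMap.ker ((B ^ (k + 2) : Y →L[ℂ] Y) : Y →ₗ[ℂ] Y) := ker_pow_step hk
    refine ⟨k + 1, ?_⟩
    ext v
    obtain ⟨x, y⟩ := v
    simp only [LinearMap.mem_ker, ContinuousLinearMap.coe_coe, hM, ucMat_pow_apply, Prod.mk_eq_zero]
    constructor
    · rintro ⟨-, hb⟩
      have hb2 : (B ^ (k + 2)) y = 0 := by
        calc (B ^ (k + 2)) y = B ((B ^ (k + 1)) y) := by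
              rw [show k + 2 = (k + 1) + 1 from rfl, pow_succ' B (k + 1)]; rfl
        _ = 0 := by rw [hb, map_zero]
      exact ⟨by rw [hb, map_zero], hb2⟩
    · rintro ⟨-, hb⟩
      have h1 : y ∈ LinearMap.ker ((B ^ (k + 1) : Y →L[ℂ] Y) : Y →ₗ[ℂ] Y) := by
        rw [hk2]; exact LinearMap.mem_ker.mpr hb
      have h2 : y ∈ LinearMap.ker ((B ^ k : Y →L[ℂ] Y) : Y →ₗ[ℂ] Y) := by
        rw [hk]; exact h1
      have hbk : (B ^ k) y = 0 := h2
      exact ⟨by rw [hbk, map_zero], h1⟩
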